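/- Let n ≥ 1, λ > 0, ε > 0, A = [[1, λ], [λ, 1]], and D = (ε/2)·A ⊗ E00 + (1/2)·(I₂ − εA) ⊗ E11, a 4×4 matrix indexed by (a, b) ∈ {0,1}². Let V ∈ ℂ^(4^(n+1)) be the 0/1 vector V = e_{(0,0)}^{⊗n} ⊗ e_{(0,1)} + e_{(1,0)}^{⊗n} ⊗ e_{(1,1)}. Then ⟨V, D^{⊗(n+1)} V⟩ = (1/2^n)·ε^n·(1 − ε·(1 + λ^(n+1))). -/

import Mathlib

open Matrix BigOperators ComplexOrder Kronecker

/-- The 2×2 matrix `A = [[1, λ], [λ, 1]]`, viewed as a complex matrix. -/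
noncomputable def Amat (lam : ℝ) : Matrix (Fin 2) (Fin 2) ℂ :=
  !![1, (lam : ℂ); (lam : ℂ), 1]

/-- The rank-one projector `E00 = e₀e₀†` on `ℂ²`. -/
def E00 : Matrix (Fin 2) (Fin 2) ℂ := !![1, 0; 0, 0]

/-- The rank-one projector `E11 = e₁e₁†` on `ℂ²`. -/
def E11 : Matrix (Fin 2) (Fin 2) ℂ := !![0, 0; 0, 1]

/-- The 4×4 matrix `D = (ε/2)·A ⊗ E00 + (1/2)·(I₂ − εA) ⊗ E11`, with rows and
columns indexed by histories `(a, b) ∈ Fin 2 × Fin 2`. -/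
noncomputable def Dmat (lam eps : ℝ) :
    Matrix (Fin 2 × Fin 2) (Fin 2 × Fin 2) ℂ :=
  ((eps / 2 : ℂ)) • (Amat lam ⊗ₖ E00) +
    ((1 / 2 : ℂ)) • ((1 - (eps : ℂ) • Amat lam) ⊗ₖ E11)

/-- The `m`-fold Kronecker power `D^{⊗m}` of the 4×4 matrix `D`, with rows and
columns indexed by functions `Fin m → Fin 2 × Fin 2` via the standard
identification. -/
noncomputable def kronPowD (lam eps : ℝ) (m : ℕ) :
    Matrix (Fin m → Fin 2 × Fin 2) (Fin m → Fin 2 × Fin 2) ℂ :=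
  Matrix.of fun f g => ∏ k, Dmat lam eps (f k) (g k)

/-- The 0/1 vector `V = e_{(0,0)}^{⊗n} ⊗ e_{(0,1)} + e_{(1,0)}^{⊗n} ⊗ e_{(1,1)}`
in `ℂ^(4^(n+1))`. -/
def Vvec (n : ℕ) : (Fin (n + 1) → Fin 2 × Fin 2) → ℂ := fun f =>
  (if f = (fun k => if k = Fin.last n then ((0 : Fin 2), (1 : Fin 2)) else (0, 0))
    then 1 else 0) +
  (if f = (fun k => if k = Fin.last n then ((1 : Fin 2), (1 : Fin 2)) else (1, 0))
    then 1 else 0)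

/-- For `n ≥ 1`, `λ > 0` and `ε > 0`, the quadratic form of `D^{⊗(n+1)}` at the
0/1 vector `V` equals `(1/2^n)·ε^n·(1 − ε·(1 + λ^(n+1)))`. -/
theorem quadratic_form_of_kronPow_at_V (n : ℕ) (hn : 1 ≤ n)
    (lam eps : ℝ) (hlam : 0 < lam) (heps : 0 < eps) :
    star (Vvec n) ⬝ᵥ (kronPowD lam eps (n + 1)).mulVec (Vvec n) =
      ((1 / 2 ^ n * eps ^ n * (1 - eps * (1 + lam ^ (n + 1))) : ℝ) : ℂ) := by
  classical
  set f₀ : Fin (n+1) → Fin 2 × Fin 2 :=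
    fun k => if k = Fin.last n then ((0 : Fin 2), (1 : Fin 2)) else (0, 0) with hf0
  set f₁ : Fin (n+1) → Fin 2 × Fin 2 :=
    fun k => if k = Fin.last n then ((1 : Fin 2), (1 : Fin 2)) else (1, 0) with hf1
  set M := kronPowD lam eps (n+1) with hM
  have hexp : star (Vvec n) ⬝ᵥ M.mulVec (Vvec n)
      = M f₀ f₀ + M f₀ f₁ + (M f₁ f₀ + M f₁ f₁) := by
    simp only [dotProduct, mulVec, Vvec, Pi.star_apply, ← hf0, ← hf1,
      star_add, apply_ite (star : ℂ → ℂ), star_one, star_zero,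
      add_mul, mul_add, ite_mul, one_mul, zero_mul, mul_ite, mul_one, mul_zero,
      Finset.sum_add_distrib, Finset.sum_ite_eq', Finset.mem_univ, if_true]
    ring
  rw [hexp]
  have hlastne : ∀ k : Fin n, (Fin.castSucc k) ≠ Fin.last n :=
    fun k => (Fin.castSucc_lt_last k).ne
  have hf0c : ∀ k : Fin n, f₀ (Fin.castSucc k) = (0,0) := fun k => by
    simp [hf0, hlastne k]
  have hf1c : ∀ k : Fin n, f₁ (Fin.castSucc k) = (1,0) := fun k => by
    simp [hf1, hlastne k]
  have hf0l : f₀ (Fin.last n) = (0,1) := by simp [hf0]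
  have hf1l : f₁ (Fin.last n) = (1,1) := by simp [hf1]
  have d00 : Dmat lam eps (0,0) (0,0) = (eps:ℂ)/2 := by
    simp [Dmat, Amat, E00, E11, Matrix.one_apply]
  have d01 : Dmat lam eps (0,1) (0,1) = (1/2:ℂ) * (1 - eps) := by
    simp [Dmat, Amat, E00, E11, Matrix.one_apply]
  have d10 : Dmat lam eps (0,0) (1,0) = (eps:ℂ)*lam/2 := by
    simp [Dmat, Amat, E00, E11, Matrix.one_apply]; ring
  have d11 : Dmat lam eps (0,1) (1,1) = -((1/2:ℂ) * (eps*lam)) := by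
    simp [Dmat, Amat, E00, E11, Matrix.one_apply]
  have e00 : Dmat lam eps (1,0) (1,0) = (eps:ℂ)/2 := by
    simp [Dmat, Amat, E00, E11, Matrix.one_apply]
  have e01 : Dmat lam eps (1,1) (1,1) = (1/2:ℂ) * (1 - eps) := by
    simp [Dmat, Amat, E00, E11, Matrix.one_apply]
  have e10 : Dmat lam eps (1,0) (0,0) = (eps:ℂ)*lam/2 := by
    simp [Dmat, Amat, E00, E11, Matrix.one_apply]; ring
  have e11 : Dmat lam eps (1,1) (0,1) = -((1/2:ℂ) * (eps*lam)) := by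
    simp [Dmat, Amat, E00, E11, Matrix.one_apply]
  have key : ∀ (f g : Fin (n+1) → Fin 2 × Fin 2) (c d : ℂ),
      (∀ k : Fin n, Dmat lam eps (f (Fin.castSucc k)) (g (Fin.castSucc k)) = c) →
      Dmat lam eps (f (Fin.last n)) (g (Fin.last n)) = d →
      M f g = c ^ n * d := by
    intro f g c d hc hd
    rw [hM, kronPowD, Matrix.of_apply, Fin.prod_univ_castSucc, hd]
    congr 1
    rw [Finset.prod_congr rfl (fun k _ => hc k), Finset.prod_const, Finset.card_univ,
      Fintype.card_fin]
  rw [key f₀ f₀ _ _ (fun k => by rw [hf0c, d00]) (by rw [hf0l, d01]),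
    key f₀ f₁ _ _ (fun k => by rw [hf0c, hf1c, d10]) (by rw [hf0l, hf1l, d11]),
    key f₁ f₀ _ _ (fun k => by rw [hf1c, hf0c, e10]) (by rw [hf1l, hf0l, e11]),
    key f₁ f₁ _ _ (fun k => by rw [hf1c, e00]) (by rw [hf1l, e01])]
  push_cast
  ring_nf
  norm_num
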